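/- Let h > 1, let n ≡ Σ_{i=0}^{h−1} n_i 3^i + 1 (mod 3^h) with n_0 ∈ {0,1,2} and n_1 = ... = n_{h−1} = 2, and let e = Σ_{i=0}^{h−1} e_i 3^i with e_0 = 1 and e_i ∈ {0,2} for 1 ≤ i ≤ h−1. Then p(n,e) ≡ 2 (mod 3). -/

import Mathlib

/-- The cardinality of the `n`-dimensional Lee ball of radius `e`. -/
def leeK (n e : ℕ) : ℕ := ∑ i ∈ Finset.range (min n e + 1), 2 ^ i * n.choose i * e.choose i

/-- `p(n,e) = Σ_{i=0}^{e} 2 i² k(n−1, e−i)`. -/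
def leeP (n e : ℕ) : ℕ := ∑ i ∈ Finset.range (e + 1), 2 * i ^ 2 * leeK (n - 1) (e - i)

open Finset

lemma leeK_full (n e : ℕ) : leeK n e = ∑ i ∈ range (e + 1), 2 ^ i * n.choose i * e.choose i := by
  rw [leeK]
  apply Finset.sum_subset
  · exact Finset.range_subset_range.2 (by omega)
  · intro i hi hni
    simp only [mem_range] at hi hni
    have : n < i := by omega
    simp [Nat.choose_eq_zero_of_lt this]

lemma leeK_zero (n : ℕ) : leeK n 0 = 1 := by simp [leeK]

lemma sum_range_three_mul {M : Type*} [AddCommMonoid M] (m : ℕ) (g : ℕ → M) :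
    ∑ i ∈ range (3 * m), g i = ∑ q ∈ range m, (g (3 * q) + g (3 * q + 1) + g (3 * q + 2)) := by
  induction m with
  | zero => simp
  | succ k ih =>
    have h : 3 * (k + 1) = 3 * k + 1 + 1 + 1 := by ring
    rw [h, sum_range_succ, sum_range_succ, sum_range_succ, ih, sum_range_succ]
    abel

instance : Fact (Nat.Prime 3) := ⟨by norm_num⟩

lemma choose_cast3 (n k : ℕ) :
    ((n.choose k : ℕ) : ZMod 3) = ((n % 3).choose (k % 3) : ℕ) * ((n / 3).choose (k / 3) : ℕ) := by
  rw [← Nat.cast_mul, ZMod.natCast_eq_natCast_iff]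
  exact Choose.choose_modEq_choose_mod_mul_choose_div_nat

lemma lucasK (n e : ℕ) :
    ((leeK n e : ℕ) : ZMod 3)
      = (leeK (n % 3) (e % 3) : ℕ) * ((leeK (n / 3) (e / 3) : ℕ) : ZMod 3) := by
  have hext : ((leeK n e : ℕ) : ZMod 3)
      = ∑ i ∈ range (3 * (e / 3 + 1)), (2 : ZMod 3) ^ i * n.choose i * e.choose i := by
    rw [leeK_full]
    push_cast
    apply Finset.sum_subset
    · exact Finset.range_subset_range.2 (by omega)
    · intro i hi hni
      simp only [mem_range] at hi hni
      have : e < i := by omega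
      simp [Nat.choose_eq_zero_of_lt this]
  rw [hext, sum_range_three_mul]
  have key : ∀ q r : ℕ, r < 3 →
      (2 : ZMod 3) ^ (3 * q + r) * n.choose (3 * q + r) * e.choose (3 * q + r)
      = ((2 : ZMod 3) ^ r * (n % 3).choose r * (e % 3).choose r)
        * ((2 : ZMod 3) ^ q * (n / 3).choose q * (e / 3).choose q) := by
    intro q r hr
    have hmod : (3 * q + r) % 3 = r := by omega
    have hdiv : (3 * q + r) / 3 = q := by omega
    have h2 : (2 : ZMod 3) ^ (3 * q + r) = 2 ^ r * 2 ^ q := by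
      rw [pow_add, pow_mul]
      have h8 : (2 : ZMod 3) ^ 3 = 2 := rfl
      rw [h8]
      ring
    rw [choose_cast3 n, choose_cast3 e, hmod, hdiv, h2]
    ring
  have hsum : ∀ q ∈ range (e / 3 + 1),
      ((2:ZMod 3) ^ (3*q) * n.choose (3*q) * e.choose (3*q)
       + (2:ZMod 3) ^ (3*q+1) * n.choose (3*q+1) * e.choose (3*q+1)
       + (2:ZMod 3) ^ (3*q+2) * n.choose (3*q+2) * e.choose (3*q+2))
      = ((leeK (n % 3) (e % 3) : ℕ) : ZMod 3)
        * ((2 : ZMod 3) ^ q * (n / 3).choose q * (e / 3).choose q) := by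
    intro q _
    have h0 := key q 0 (by norm_num)
    have h1 := key q 1 (by norm_num)
    have h2 := key q 2 (by norm_num)
    simp only [add_zero] at h0
    rw [h0, h1, h2, ← add_mul, ← add_mul]
    congr 1
    have hA : ((leeK (n % 3) (e % 3) : ℕ) : ZMod 3)
        = ∑ r ∈ range 3, (2 : ZMod 3) ^ r * (n % 3).choose r * (e % 3).choose r := by
      rw [leeK_full]
      push_cast
      apply Finset.sum_subset
      · exact Finset.range_subset_range.2 (by omega)
      · intro i hi hni
        simp only [mem_range] at hi hni
        have : e % 3 < i := by omega
        simp [Nat.choose_eq_zero_of_lt this]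
    rw [hA]
    norm_num [Finset.sum_range_succ]
  rw [Finset.sum_congr rfl hsum, ← Finset.mul_sum]
  congr 1
  rw [leeK_full]
  push_cast
  rfl

lemma sum_digits_lt (d : ℕ → ℕ) (k : ℕ) (hd : ∀ i, i < k → d i < 3) :
    ∑ i ∈ range k, d i * 3 ^ i < 3 ^ k := by
  induction k with
  | zero => simp
  | succ m ih =>
    rw [sum_range_succ]
    have h1 : ∑ i ∈ range m, d i * 3 ^ i < 3 ^ m := ih (fun i hi => hd i (by omega))
    have h2 : d m < 3 := hd m (by omega)
    have h3 : 3 ^ (m + 1) = 3 * 3 ^ m := by rw [pow_succ]; ring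
    have h4 : d m * 3 ^ m ≤ 2 * 3 ^ m := Nat.mul_le_mul_right _ (by omega)
    omega

lemma digit_sum (d : ℕ → ℕ) (k : ℕ) (hd : ∀ i, i < k → d i < 3) (j : ℕ) (hj : j < k) :
    (∑ i ∈ range k, d i * 3 ^ i) / 3 ^ j % 3 = d j := by
  have hsplit : ∑ i ∈ range k, d i * 3 ^ i
      = (∑ i ∈ range j, d i * 3 ^ i)
        + 3 ^ j * (d j + 3 * ∑ t ∈ range (k - j - 1), d (j + 1 + t) * 3 ^ t) := by
    have hIco : ∑ i ∈ Ico j k, d i * 3 ^ i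
        = 3 ^ j * (d j + 3 * ∑ t ∈ range (k - j - 1), d (j + 1 + t) * 3 ^ t) := by
      rw [Finset.sum_Ico_eq_sum_range]
      have hkj : k - j = (k - j - 1) + 1 := by omega
      rw [hkj, Finset.sum_range_succ']
      have hterm : ∀ t, d (j + (t + 1)) * 3 ^ (j + (t + 1))
          = 3 ^ j * (3 * (d (j + 1 + t) * 3 ^ t)) := by
        intro t
        have harg : j + (t + 1) = j + 1 + t := by omega
        rw [harg, pow_add, pow_add, pow_one]
        ring
      rw [Finset.sum_congr rfl (fun t _ => hterm t), ← Finset.mul_sum, ← Finset.mul_sum,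
        Nat.add_sub_cancel]
      have hgen : ∀ S : ℕ, 3 ^ j * (3 * S) + d j * 3 ^ j = 3 ^ j * (d j + 3 * S) := by
        intro S; ring
      exact hgen _
    rw [← Finset.sum_range_add_sum_Ico _ (le_of_lt hj), hIco]
  rw [hsplit]
  have hL : ∑ i ∈ range j, d i * 3 ^ i < 3 ^ j := sum_digits_lt d j (fun i hi => hd i (by omega))
  rw [Nat.add_mul_div_left _ _ (by positivity : 0 < (3:ℕ) ^ j), Nat.div_eq_of_lt hL]
  have := hd j hj
  omega

lemma lemB : ∀ f N : ℕ, (∀ i, 3 ^ i ≤ f → N / 3 ^ i % 3 = 2) →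
    (∀ i, f / 3 ^ i % 3 ≠ 1) → ((leeK N f : ℕ) : ZMod 3) = 1 := by
  intro f
  induction f using Nat.strong_induction_on with
  | _ f ih =>
    intro N hN hf
    rcases Nat.eq_zero_or_pos f with h0 | hpos
    · subst h0
      rw [leeK_zero]
      norm_num
    · have hN0 : N % 3 = 2 := by simpa using hN 0 (by rw [pow_zero]; exact hpos)
      have hf0 : f % 3 ≠ 1 := by simpa using hf 0
      have hrec : ((leeK (N / 3) (f / 3) : ℕ) : ZMod 3) = 1 := by
        apply ih (f / 3) (by omega)
        · intro i hi
          have hpow : (3:ℕ) ^ (i + 1) = 3 * 3 ^ i := by rw [pow_succ]; ring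
          have h3 : 3 ^ (i + 1) ≤ f := by omega
          have := hN (i + 1) h3
          rw [Nat.div_div_eq_div_mul, ← pow_succ']
          exact this
        · intro i
          have := hf (i + 1)
          rw [Nat.div_div_eq_div_mul, ← pow_succ']
          exact this
      rw [lucasK, hrec, mul_one, hN0]
      have : f % 3 = 0 ∨ f % 3 = 2 := by omega
      rcases this with h | h <;> rw [h] <;> decide

lemma lemA : ∀ f N : ℕ, (∀ i, 3 ^ i ≤ f → N / 3 ^ i % 3 = 2) →
    (∀ i, f / 3 ^ i % 3 ≠ 1) → ∑ m ∈ range f, ((leeK N m : ℕ) : ZMod 3) = 0 := by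
  intro f
  induction f using Nat.strong_induction_on with
  | _ f ih =>
    intro N hN hf
    rcases Nat.eq_zero_or_pos f with h0 | hpos
    · subst h0; simp
    · have hN0 : N % 3 = 2 := by simpa using hN 0 (by rw [pow_zero]; exact hpos)
      have hf0 : f % 3 ≠ 1 := by simpa using hf 0
      have hNd : ∀ i, 3 ^ i ≤ f / 3 → (N / 3) / 3 ^ i % 3 = 2 := by
        intro i hi
        have hpow : (3:ℕ) ^ (i + 1) = 3 * 3 ^ i := by rw [pow_succ]; ring
        have h3 : 3 ^ (i + 1) ≤ f := by omega
        have := hN (i + 1) h3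
        rw [Nat.div_div_eq_div_mul, ← pow_succ']
        exact this
      have hfd : ∀ i, (f / 3) / 3 ^ i % 3 ≠ 1 := by
        intro i
        have := hf (i + 1)
        rw [Nat.div_div_eq_div_mul, ← pow_succ']
        exact this
      have hsum0 : ∑ q ∈ range (f / 3), ((leeK (N / 3) q : ℕ) : ZMod 3) = 0 :=
        ih (f / 3) (by omega) (N / 3) hNd hfd
      have hterm : ∀ q r : ℕ, r < 3 →
          ((leeK N (3 * q + r) : ℕ) : ZMod 3)
          = (leeK 2 r : ℕ) * ((leeK (N / 3) q : ℕ) : ZMod 3) := by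
        intro q r hr
        have hmod : (3 * q + r) % 3 = r := by omega
        have hdiv : (3 * q + r) / 3 = q := by omega
        rw [lucasK, hmod, hdiv, hN0]
      have hbr : ∀ q ∈ range (f / 3),
          (((leeK N (3 * q) : ℕ) : ZMod 3) + ((leeK N (3 * q + 1) : ℕ) : ZMod 3)
            + ((leeK N (3 * q + 2) : ℕ) : ZMod 3))
          = ((leeK (N / 3) q : ℕ) : ZMod 3) := by
        intro q _
        have h0 := hterm q 0 (by norm_num)
        have h1 := hterm q 1 (by norm_num)
        have h2 := hterm q 2 (by norm_num)
        simp only [add_zero] at h0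
        rw [h0, h1, h2, ← add_mul, ← add_mul]
        have hval : ((leeK 2 0 : ℕ) : ZMod 3) + (leeK 2 1 : ℕ) + (leeK 2 2 : ℕ) = 1 := by decide
        rw [hval, one_mul]
      have hmain3 : ∑ m ∈ range (3 * (f / 3)), ((leeK N m : ℕ) : ZMod 3) = 0 := by
        rw [sum_range_three_mul, Finset.sum_congr rfl hbr, hsum0]
      have : f % 3 = 0 ∨ f % 3 = 2 := by omega
      rcases this with h | h
      · have hfe : f = 3 * (f / 3) := by omega
        rw [hfe]
        exact hmain3
      · have hfe : f = 3 * (f / 3) + 1 + 1 := by omega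
        rw [hfe, sum_range_succ, sum_range_succ]
        have h0 := hterm (f / 3) 0 (by norm_num)
        have h1 := hterm (f / 3) 1 (by norm_num)
        simp only [add_zero] at h0
        rw [h0, h1, hmain3]
        have hval : ((leeK 2 0 : ℕ) : ZMod 3) + (leeK 2 1 : ℕ) = 0 := by decide
        rw [zero_add, ← add_mul, hval, zero_mul]
theorem leeP_eq_two_mod_three (h : ℕ) (hh : 1 < h) (n : ℕ) (hn : 0 < n)
    (nd : ℕ → ℕ) (hnd0 : nd 0 < 3) (hnd : ∀ i, 1 ≤ i → i ≤ h - 1 → nd i = 2)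
    (hncong : n ≡ (∑ i ∈ Finset.range h, nd i * 3 ^ i) + 1 [MOD 3 ^ h])
    (ed : ℕ → ℕ) (hed0 : ed 0 = 1) (hed : ∀ i, 1 ≤ i → i ≤ h - 1 → ed i = 0 ∨ ed i = 2)
    (e : ℕ) (he : e = ∑ i ∈ Finset.range h, ed i * 3 ^ i) :
    leeP n e ≡ 2 [MOD 3] := by
  set N := n - 1 with hNdef
  set T := ∑ i ∈ Finset.range h, nd i * 3 ^ i with hTdef
  -- digits are small
  have hndlt : ∀ i, i < h → nd i < 3 := by
    intro i hi
    rcases Nat.eq_zero_or_pos i with h0 | h0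
    · subst h0; exact hnd0
    · rw [hnd i h0 (by omega)]; omega
  have hedlt : ∀ i, i < h → ed i < 3 := by
    intro i hi
    rcases Nat.eq_zero_or_pos i with h0 | h0
    · subst h0; rw [hed0]; omega
    · rcases hed i h0 (by omega) with h2 | h2 <;> omega
  have hTlt : T < 3 ^ h := sum_digits_lt nd h hndlt
  have helt : e < 3 ^ h := by rw [he]; exact sum_digits_lt ed h hedlt
  -- N ≡ T mod 3^h
  have hNT : N % 3 ^ h = T % 3 ^ h := by
    have h1 : N + 1 ≡ T + 1 [MOD 3 ^ h] := by
      have : N + 1 = n := by omega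
      rw [this]; exact hncong
    exact Nat.ModEq.add_right_cancel' 1 h1
  -- digit extraction for N
  have hNdig : ∀ j, j < h → N / 3 ^ j % 3 = nd j := by
    intro j hj
    have hd1 : N / 3 ^ j % 3 = N % 3 ^ (j + 1) / 3 ^ j := by
      rw [← Nat.mod_mul_right_div_self, ← pow_succ]
    have hd2 : T / 3 ^ j % 3 = T % 3 ^ (j + 1) / 3 ^ j := by
      rw [← Nat.mod_mul_right_div_self, ← pow_succ]
    have hmm : N % 3 ^ (j + 1) = T % 3 ^ (j + 1) := by
      have hdvd : (3:ℕ) ^ (j + 1) ∣ 3 ^ h := pow_dvd_pow 3 (by omega)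
      calc N % 3 ^ (j + 1) = N % 3 ^ h % 3 ^ (j + 1) := (Nat.mod_mod_of_dvd N hdvd).symm
        _ = T % 3 ^ h % 3 ^ (j + 1) := by rw [hNT]
        _ = T % 3 ^ (j + 1) := Nat.mod_mod_of_dvd T hdvd
    rw [hd1, hmm, ← hd2]
    exact digit_sum nd h hndlt j hj
  have hedig : ∀ j, j < h → e / 3 ^ j % 3 = ed j := by
    intro j hj
    rw [he]
    exact digit_sum ed h hedlt j hj
  -- e = 3 f + 1
  have he3 : e % 3 = 1 := by
    have := hedig 0 (by omega)
    simpa [hed0] using this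
  set f := e / 3 with hfdef
  have hef : e = 3 * f + 1 := by omega
  -- hypotheses of lemA / lemB for (N/3, f)
  have hNf : ∀ i, 3 ^ i ≤ f → (N / 3) / 3 ^ i % 3 = 2 := by
    intro i hi
    have hpow : (3:ℕ) ^ (i + 1) = 3 * 3 ^ i := by rw [pow_succ]; ring
    have hlt : 3 ^ (i + 1) < 3 ^ h := by omega
    have hih : i + 1 < h := by
      by_contra hcon
      have : (3:ℕ) ^ h ≤ 3 ^ (i + 1) := Nat.pow_le_pow_right (by norm_num) (by omega)
      omega
    have := hNdig (i + 1) hih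
    rw [Nat.div_div_eq_div_mul, ← pow_succ', this]
    exact hnd (i + 1) (by omega) (by omega)
  have hDf : ∀ i, f / 3 ^ i % 3 ≠ 1 := by
    intro i
    have hdd : f / 3 ^ i = e / 3 ^ (i + 1) := by
      rw [hfdef, Nat.div_div_eq_div_mul, ← pow_succ']
    rcases Nat.lt_or_ge (i + 1) h with hih | hih
    · rw [hdd, hedig (i + 1) hih]
      rcases hed (i + 1) (by omega) (by omega) with h2 | h2 <;> omega
    · have : (3:ℕ) ^ h ≤ 3 ^ (i + 1) := Nat.pow_le_pow_right (by norm_num) hih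
      have : e / 3 ^ (i + 1) = 0 := Nat.div_eq_of_lt (by omega)
      rw [hdd, this]
      omega
  -- cast of leeP and reflection
  have he1 : ((e : ℕ) : ZMod 3) = 1 := by
    rw [← ZMod.natCast_mod, he3]
    rfl
  have hcast : ((leeP n e : ℕ) : ZMod 3)
      = ∑ m ∈ Finset.range (e + 1),
          2 * (1 - (m : ZMod 3)) ^ 2 * ((leeK N m : ℕ) : ZMod 3) := by
    rw [leeP, Nat.cast_sum,
      ← Finset.sum_range_reflect
        (fun m => 2 * (1 - (m : ZMod 3)) ^ 2 * ((leeK N m : ℕ) : ZMod 3)) (e + 1)]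
    apply Finset.sum_congr rfl
    intro j hj
    simp only [Finset.mem_range] at hj
    have h1 : e + 1 - 1 - j = e - j := by omega
    rw [h1]
    have h2 : ((e - j : ℕ) : ZMod 3) = 1 - (j : ZMod 3) := by
      rw [Nat.cast_sub (by omega), he1]
    rw [h2]
    push_cast
    ring
  -- split the sum
  have hz3 : ((3:ℕ) : ZMod 3) = 0 := rfl
  have hc3q : ∀ q : ℕ, (((3 * q : ℕ)) : ZMod 3) = 0 := by
    intro q; push_cast; rw [show (3:ZMod 3) = 0 from rfl]; ring
  have hbr : ∀ q ∈ Finset.range f,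
      (2 * (1 - ((3 * q : ℕ) : ZMod 3)) ^ 2 * ((leeK N (3 * q) : ℕ) : ZMod 3)
        + 2 * (1 - ((3 * q + 1 : ℕ) : ZMod 3)) ^ 2 * ((leeK N (3 * q + 1) : ℕ) : ZMod 3)
        + 2 * (1 - ((3 * q + 2 : ℕ) : ZMod 3)) ^ 2 * ((leeK N (3 * q + 2) : ℕ) : ZMod 3))
      = (2 * (leeK (N % 3) 0 : ℕ) + 2 * (leeK (N % 3) 2 : ℕ))
          * ((leeK (N / 3) q : ℕ) : ZMod 3) := by
    intro q _
    have hc0 : ((3 * q : ℕ) : ZMod 3) = 0 := hc3q q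
    have hc1 : ((3 * q + 1 : ℕ) : ZMod 3) = 1 := by
      push_cast; rw [show (3:ZMod 3) = 0 from rfl]; ring
    have hc2 : ((3 * q + 2 : ℕ) : ZMod 3) = 2 := by
      push_cast; rw [show (3:ZMod 3) = 0 from rfl]; ring
    have hl0 : ((leeK N (3 * q) : ℕ) : ZMod 3)
        = (leeK (N % 3) 0 : ℕ) * ((leeK (N / 3) q : ℕ) : ZMod 3) := by
      have hm : 3 * q % 3 = 0 := by omega
      have hd : 3 * q / 3 = q := by omega
      rw [lucasK, hm, hd]
    have hl2 : ((leeK N (3 * q + 2) : ℕ) : ZMod 3)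
        = (leeK (N % 3) 2 : ℕ) * ((leeK (N / 3) q : ℕ) : ZMod 3) := by
      have hm : (3 * q + 2) % 3 = 2 := by omega
      have hd : (3 * q + 2) / 3 = q := by omega
      rw [lucasK, hm, hd]
    rw [hc0, hc1, hc2, hl0, hl2]
    have h12 : (1 - (1:ZMod 3)) ^ 2 = 0 := by decide
    have h22 : (1 - (2:ZMod 3)) ^ 2 = 1 := by decide
    rw [h12, h22]
    ring
  have hsum0 : ∑ q ∈ Finset.range f, ((leeK (N / 3) q : ℕ) : ZMod 3) = 0 :=
    lemA f (N / 3) hNf hDf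
  have htop : ((leeK N (3 * f) : ℕ) : ZMod 3) = 1 := by
    rw [lucasK]
    have hm : 3 * f % 3 = 0 := by omega
    have hd : 3 * f / 3 = f := by omega
    rw [hm, hd, leeK_zero, lemB f (N / 3) hNf hDf]
    simp
  have hfinal : ((leeP n e : ℕ) : ZMod 3) = 2 := by
    rw [hcast]
    rw [show e + 1 = 3 * f + 1 + 1 by omega, Finset.sum_range_succ, Finset.sum_range_succ,
      sum_range_three_mul, Finset.sum_congr rfl hbr, ← Finset.mul_sum, hsum0, mul_zero]
    have hcf1 : ((3 * f + 1 : ℕ) : ZMod 3) = 1 := by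
      push_cast; rw [show (3:ZMod 3) = 0 from rfl]; ring
    have hcf0 : ((3 * f : ℕ) : ZMod 3) = 0 := hc3q f
    rw [hcf1, hcf0, htop]
    ring_nf
  have : ((leeP n e : ℕ) : ZMod 3) = ((2 : ℕ) : ZMod 3) := by rw [hfinal]; rfl
  exact (ZMod.natCast_eq_natCast_iff _ _ _).mp this
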